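/- The value function is strictly radially increasing: for each ϑ ∈ [0, π/2], the map r ↦ J(r sin ϑ, r cos ϑ) is strictly increasing on [0, ∞). -/

import Mathlib

open Real Filter Set

noncomputable section

/-- The field Lagrangian `L_f(v₁,v₂) = (v₁² + v₂²)/4 − 1`. -/
def Lf (v₁ v₂ : ℝ) : ℝ := (v₁ ^ 2 + v₂ ^ 2) / 4 - 1

/-- The effective road Hamiltonian `H_r(q) = q² + (p_q)² + 1` built from the
critical-slope function `pq`. -/
def Hr (pq : ℝ → ℝ) (q : ℝ) : ℝ := q ^ 2 + pq q ^ 2 + 1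

/-- The road Lagrangian: the Legendre transform of `Hr`. -/
def Lr (pq : ℝ → ℝ) (v : ℝ) : ℝ := ⨆ q : ℝ, (v * q - Hr pq q)

/-- `pq` assigns to each `q` the critical slope `p_q`: it equals `0` when
`(D−1)q² ≤ 1`, and otherwise it is the unique positive root of
`(D−1)q² = p² + 1 + μp/(κν + p)`. -/
def IsCriticalSlope (D μ ν κ : ℝ) (pq : ℝ → ℝ) : Prop :=
  ∀ q : ℝ,
    ((D - 1) * q ^ 2 ≤ 1 → pq q = 0) ∧
    (1 < (D - 1) * q ^ 2 →
      0 < pq q ∧ (D - 1) * q ^ 2 = pq q ^ 2 + 1 + μ * pq q / (κ * ν + pq q))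

/-- The set of candidate costs in the control problem at a point `(x,y)` with
`x ≥ 0`, `y ≥ 0`: the pure-field cost, the broken road-then-field costs, and
(when `y = 0`) the pure-road cost. -/
def Jset (pq : ℝ → ℝ) (x y : ℝ) : Set ℝ :=
  {Lf x y} ∪
    {c | ∃ τ z : ℝ, 0 < τ ∧ τ < 1 ∧ 0 ≤ z ∧ z ≤ x ∧
      c = (1 - τ) * Lf ((x - z) / (1 - τ)) (y / (1 - τ)) + τ * Lr pq (z / τ)} ∪
    (if y = 0 then {Lr pq x} else ∅)

/-- The value function `J(x,y)`, extended evenly in `x`. -/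
def J (pq : ℝ → ℝ) (x y : ℝ) : ℝ := sInf (Jset pq |x| y)
/-- The field Hamiltonian `H_f(q,p) = q² + p² + 1`. -/
def Hf (q p : ℝ) : ℝ := q ^ 2 + p ^ 2 + 1

/-- The road boundary Hamiltonian `F₀(q,p) = Dq² − μp/(κν + p)`. -/
def F0 (D μ ν κ q p : ℝ) : ℝ := D * q ^ 2 - μ * p / (κ * ν + p)

/-- The spreading speed along the road, `inf_{q>0} H_r(q)/q`. -/
def roadSpeed (pq : ℝ → ℝ) : ℝ := sInf ((fun q => Hr pq q / q) '' Set.Ioi (0 : ℝ))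

/-- The directional spreading speed in direction `ϑ` (measured from the
positive `y`-axis). -/
def cstar (pq : ℝ → ℝ) (ϑ : ℝ) : ℝ :=
  sSup {r : ℝ | 0 ≤ r ∧ J pq (r * Real.sin ϑ) (r * Real.cos ϑ) ≤ 0}

/-- Reflection across the line through the origin in direction `(cos a, sin a)`. -/
def Psi (a : ℝ) (p : ℝ × ℝ) : ℝ × ℝ :=
  (p.1 * Real.cos (2 * a) + p.2 * Real.sin (2 * a),
   p.1 * Real.sin (2 * a) - p.2 * Real.cos (2 * a))

/-- The closed cone of opening angle `2a` between the positive `x`-axis and the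
ray at angle `π/2 − 2a` from the positive `y`-axis. -/
def coneA (a : ℝ) : Set (ℝ × ℝ) :=
  {p | ∃ r ϑ : ℝ, 0 ≤ r ∧ π / 2 - 2 * a ≤ ϑ ∧ ϑ ≤ π / 2 ∧
    p = (r * Real.sin ϑ, r * Real.cos ϑ)}

/-! ### Auxiliary lemmas -/

lemma hr_one_le (pq : ℝ → ℝ) (q : ℝ) : 1 ≤ Hr pq q := by
  unfold Hr; nlinarith [sq_nonneg q, sq_nonneg (pq q)]

lemma lr_bddAbove (pq : ℝ → ℝ) (v : ℝ) :
    BddAbove (Set.range fun q => v * q - Hr pq q) := by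
  refine ⟨v ^ 2 / 4 - 1, ?_⟩
  rintro _ ⟨q, rfl⟩
  unfold Hr
  nlinarith [sq_nonneg (v / 2 - q), sq_nonneg (pq q)]

lemma le_lr (pq : ℝ → ℝ) (v q : ℝ) : v * q - Hr pq q ≤ Lr pq v :=
  le_ciSup (lr_bddAbove pq v) q

lemma lr_ge_neg_one (pq : ℝ → ℝ) (h0 : pq 0 = 0) (v : ℝ) : -1 ≤ Lr pq v := by
  have h := le_lr pq v 0
  simp [Hr, h0] at h
  linarith

lemma lf_ge_neg_one (a b : ℝ) : -1 ≤ Lf a b := by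
  unfold Lf; nlinarith [sq_nonneg a, sq_nonneg b]

lemma lf_scale {l : ℝ} (hl0 : 0 ≤ l) (hl1 : l ≤ 1) (a b : ℝ) :
    Lf (l * a) (l * b) ≤ l * Lf a b - (1 - l) := by
  unfold Lf
  nlinarith [mul_nonneg (mul_nonneg hl0 (sub_nonneg.2 hl1))
    (add_nonneg (sq_nonneg a) (sq_nonneg b))]

lemma lr_scale (pq : ℝ → ℝ) {l : ℝ} (hl0 : 0 ≤ l) (hl1 : l ≤ 1) (v : ℝ) :
    Lr pq (l * v) ≤ l * Lr pq v - (1 - l) := by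
  refine ciSup_le fun q => ?_
  have h1 := le_lr pq v q
  have h2 := hr_one_le pq q
  nlinarith [mul_nonneg (sub_nonneg.2 hl1) (sub_nonneg.2 h2),
    mul_nonneg hl0 (sub_nonneg.2 h1)]

lemma jset_cases {pq : ℝ → ℝ} {x y c : ℝ} (hc : c ∈ Jset pq x y) :
    c = Lf x y ∨
    (∃ τ z : ℝ, 0 < τ ∧ τ < 1 ∧ 0 ≤ z ∧ z ≤ x ∧
      c = (1 - τ) * Lf ((x - z) / (1 - τ)) (y / (1 - τ)) + τ * Lr pq (z / τ)) ∨
    (y = 0 ∧ c = Lr pq x) := by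
  rcases hc with (h | h) | h
  · exact Or.inl h
  · exact Or.inr (Or.inl h)
  · by_cases hy : y = 0
    · rw [if_pos hy] at h; exact Or.inr (Or.inr ⟨hy, h⟩)
    · rw [if_neg hy] at h; exact absurd h (Set.notMem_empty c)

lemma jset_ge_neg_one {pq : ℝ → ℝ} (h0 : pq 0 = 0) {x y c : ℝ}
    (hc : c ∈ Jset pq x y) : -1 ≤ c := by
  rcases jset_cases hc with h | ⟨τ, z, hτ0, hτ1, hz0, hzx, h⟩ | ⟨hy, h⟩
  · exact h ▸ lf_ge_neg_one x y
  · have h1 := lf_ge_neg_one ((x - z) / (1 - τ)) (y / (1 - τ))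
    have h2 := lr_ge_neg_one pq h0 (z / τ)
    subst h
    nlinarith [mul_nonneg (by linarith : (0:ℝ) ≤ 1 - τ) (by linarith : (0:ℝ) ≤ Lf ((x - z) / (1 - τ)) (y / (1 - τ)) + 1),
      mul_nonneg hτ0.le (by linarith : (0:ℝ) ≤ Lr pq (z / τ) + 1)]
  · exact h ▸ lr_ge_neg_one pq h0 x

lemma jset_bddBelow {pq : ℝ → ℝ} (h0 : pq 0 = 0) (x y : ℝ) :
    BddBelow (Jset pq x y) :=
  ⟨-1, fun _ hc => jset_ge_neg_one h0 hc⟩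

lemma jset_nonempty (pq : ℝ → ℝ) (x y : ℝ) : (Jset pq x y).Nonempty :=
  ⟨Lf x y, Or.inl (Or.inl rfl)⟩

lemma jset_scale {pq : ℝ → ℝ} {x y l c : ℝ} (hl0 : 0 ≤ l) (hl1 : l ≤ 1)
    (hc : c ∈ Jset pq x y) :
    ∃ c' ∈ Jset pq (l * x) (l * y), c' ≤ l * c - (1 - l) := by
  rcases jset_cases hc with h | ⟨τ, z, hτ0, hτ1, hz0, hzx, h⟩ | ⟨hy, h⟩
  · exact ⟨Lf (l * x) (l * y), Or.inl (Or.inl rfl), h ▸ lf_scale hl0 hl1 x y⟩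
  · refine ⟨(1 - τ) * Lf ((l * x - l * z) / (1 - τ)) ((l * y) / (1 - τ)) +
      τ * Lr pq ((l * z) / τ),
      Or.inl (Or.inr ⟨τ, l * z, hτ0, hτ1, mul_nonneg hl0 hz0,
        mul_le_mul_of_nonneg_left hzx hl0, rfl⟩), ?_⟩
    have e1 : (l * x - l * z) / (1 - τ) = l * ((x - z) / (1 - τ)) := by ring
    have e2 : (l * y) / (1 - τ) = l * (y / (1 - τ)) := by ring
    have e3 : (l * z) / τ = l * (z / τ) := by ring
    rw [e1, e2, e3]
    have h1 := lf_scale hl0 hl1 ((x - z) / (1 - τ)) (y / (1 - τ))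
    have h2 := lr_scale pq hl0 hl1 (z / τ)
    subst h
    nlinarith [mul_le_mul_of_nonneg_left h1 (by linarith : (0:ℝ) ≤ 1 - τ),
      mul_le_mul_of_nonneg_left h2 hτ0.le]
  · refine ⟨Lr pq (l * x), ?_, h ▸ lr_scale pq hl0 hl1 x⟩
    have hly : l * y = 0 := by rw [hy, mul_zero]
    right
    rw [if_pos hly]
    rfl

lemma sInf_jset_scale {pq : ℝ → ℝ} (h0 : pq 0 = 0) {x y l : ℝ}
    (hl0 : 0 ≤ l) (hl1 : l ≤ 1) :
    sInf (Jset pq (l * x) (l * y)) ≤ l * sInf (Jset pq x y) - (1 - l) := by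
  rcases eq_or_lt_of_le hl0 with rfl | hl
  · have h1 : sInf (Jset pq (0 * x) (0 * y)) ≤ Lf (0 * x) (0 * y) :=
      csInf_le (jset_bddBelow h0 _ _) (Or.inl (Or.inl rfl))
    have h2 : Lf (0 * x) (0 * y) = -1 := by simp [Lf]
    rw [h2] at h1
    linarith
  · have key : ∀ c ∈ Jset pq x y,
        sInf (Jset pq (l * x) (l * y)) ≤ l * c - (1 - l) := by
      intro c hc
      obtain ⟨c', hc', hle⟩ := jset_scale hl0 hl1 hc
      exact le_trans (csInf_le (jset_bddBelow h0 _ _) hc') hle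
    have hdiv : (sInf (Jset pq (l * x) (l * y)) + (1 - l)) / l ≤
        sInf (Jset pq x y) := by
      apply le_csInf (jset_nonempty pq x y)
      intro c hc
      rw [div_le_iff₀ hl]
      have := key c hc
      nlinarith
    have := (div_le_iff₀ hl).1 hdiv
    nlinarith

lemma lr_lower (D μ ν κ : ℝ) (hD : 1 < D) (pq : ℝ → ℝ)
    (hpq : IsCriticalSlope D μ ν κ pq) {q0 : ℝ} (hq0 : 0 < q0)
    (hDq0 : (D - 1) * q0 ^ 2 ≤ 1) {v : ℝ} (hv : 0 ≤ v) :
    min (v ^ 2 / 4) (v * q0 / 2) ≤ Lr pq v + 1 := by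
  have pq_zero : ∀ q : ℝ, 0 ≤ q → q ≤ q0 → pq q = 0 := by
    intro q h1 h2
    have hq : (D - 1) * q ^ 2 ≤ (D - 1) * q0 ^ 2 := by
      nlinarith [mul_nonneg (mul_nonneg (by linarith : (0:ℝ) ≤ D - 1)
        (by linarith : (0:ℝ) ≤ q0 - q)) (by linarith : (0:ℝ) ≤ q0 + q)]
    exact (hpq q).1 (by linarith)
  rcases le_or_gt v (2 * q0) with h | h
  · have hp : pq (v / 2) = 0 := pq_zero _ (by linarith) (by linarith)
    have hle := le_lr pq v (v / 2)
    rw [Hr, hp] at hle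
    calc min (v ^ 2 / 4) (v * q0 / 2) ≤ v ^ 2 / 4 := min_le_left _ _
      _ ≤ Lr pq v + 1 := by nlinarith
  · have hp : pq q0 = 0 := pq_zero _ hq0.le le_rfl
    have hle := le_lr pq v q0
    rw [Hr, hp] at hle
    calc min (v ^ 2 / 4) (v * q0 / 2) ≤ v * q0 / 2 := min_le_right _ _
      _ ≤ Lr pq v + 1 := by nlinarith [mul_nonneg hq0.le (by linarith : (0:ℝ) ≤ v - 2 * q0)]

set_option maxHeartbeats 1000000 in
lemma jset_gap (D μ ν κ : ℝ) (hD : 1 < D) (pq : ℝ → ℝ)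
    (hpq : IsCriticalSlope D μ ν κ pq) {x y : ℝ}
    (hx : 0 ≤ x) (hy : 0 ≤ y) (hxy : 0 < x ^ 2 + y ^ 2) :
    -1 < sInf (Jset pq x y) := by
  have h0 : pq 0 = 0 := (hpq 0).1 (by norm_num)
  obtain ⟨q0, hq0def⟩ : ∃ q0 : ℝ, q0 = min 1 (1 / (D - 1)) := ⟨_, rfl⟩
  have hq0 : 0 < q0 := by
    rw [hq0def]
    exact lt_min one_pos (one_div_pos.2 (by linarith))
  have hq0le1 : q0 ≤ 1 := hq0def ▸ min_le_left _ _
  have hq0le : q0 ≤ 1 / (D - 1) := hq0def ▸ min_le_right _ _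
  have hDq0 : (D - 1) * q0 ^ 2 ≤ 1 := by
    have h1 : q0 ^ 2 ≤ q0 := by nlinarith
    have h2 : (D - 1) * q0 ≤ 1 := by
      rw [le_div_iff₀ (by linarith : (0:ℝ) < D - 1)] at hq0le
      linarith
    nlinarith
  obtain ⟨δ, hδdef⟩ : ∃ δ : ℝ, δ = min (x ^ 2 / 16) (x * q0 / 4) + y ^ 2 / 4 :=
    ⟨_, rfl⟩
  have hδ : 0 < δ := by
    rcases lt_or_eq_of_le hx with hx' | hx'
    · have h1 : 0 < min (x ^ 2 / 16) (x * q0 / 4) :=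
        lt_min (by positivity) (by positivity)
      have h2 : (0:ℝ) ≤ y ^ 2 / 4 := by positivity
      rw [hδdef]; linarith
    · have hx0 : x = 0 := hx'.symm
      rw [hx0] at hxy
      norm_num at hxy
      have hmin : min (x ^ 2 / 16) (x * q0 / 4) = 0 := by
        rw [hx0]; norm_num
      rw [hδdef, hmin]; linarith
  have hbound : ∀ c ∈ Jset pq x y, -1 + δ ≤ c := by
    intro c hc
    rcases jset_cases hc with h | ⟨τ, z, hτ0, hτ1, hz0, hzx, h⟩ | ⟨hy0, h⟩
    · subst h
      have hm : min (x ^ 2 / 16) (x * q0 / 4) ≤ x ^ 2 / 16 := min_le_left _ _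
      rw [hδdef]
      unfold Lf
      nlinarith [sq_nonneg x]
    · subst h
      have hτ' : (0:ℝ) < 1 - τ := by linarith
      -- field part
      have efield : (1 - τ) * (Lf ((x - z) / (1 - τ)) (y / (1 - τ)) + 1) =
          ((x - z) ^ 2 + y ^ 2) / (4 * (1 - τ)) := by
        unfold Lf; field_simp
        ring
      have hfield : ((x - z) ^ 2 + y ^ 2) / 4 ≤
          (1 - τ) * (Lf ((x - z) / (1 - τ)) (y / (1 - τ)) + 1) := by
        rw [efield]
        apply div_le_div_of_nonneg_left (by positivity) (by linarith) (by linarith)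
      -- road part
      have hroad : min (z ^ 2 / 4) (z * q0 / 2) ≤ τ * (Lr pq (z / τ) + 1) := by
        have hm := lr_lower D μ ν κ hD pq hpq hq0 hDq0 (div_nonneg hz0 hτ0.le)
        have hmul := mul_le_mul_of_nonneg_left hm hτ0.le
        have eA : τ * ((z / τ) ^ 2 / 4) = z ^ 2 / (4 * τ) := by
          field_simp
        have eB : τ * ((z / τ) * q0 / 2) = z * q0 / 2 := by
          field_simp
        have hminmul : min (z ^ 2 / 4) (z * q0 / 2) ≤
            τ * min ((z / τ) ^ 2 / 4) ((z / τ) * q0 / 2) := by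
          rcases min_cases ((z / τ) ^ 2 / 4) ((z / τ) * q0 / 2) with ⟨he, _⟩ | ⟨he, _⟩
          · rw [he, eA]
            have h1 : z ^ 2 / 4 ≤ z ^ 2 / (4 * τ) :=
              div_le_div_of_nonneg_left (sq_nonneg z) (by linarith) (by linarith)
            exact le_trans (min_le_left _ _) h1
          · rw [he, eB]
            exact min_le_right _ _
        exact le_trans hminmul hmul
      -- combine
      have hsplit : (1 - τ) * Lf ((x - z) / (1 - τ)) (y / (1 - τ)) +
          τ * Lr pq (z / τ) + 1 =
          (1 - τ) * (Lf ((x - z) / (1 - τ)) (y / (1 - τ)) + 1) +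
          τ * (Lr pq (z / τ) + 1) := by ring
      have hkey : δ ≤ ((x - z) ^ 2 + y ^ 2) / 4 + min (z ^ 2 / 4) (z * q0 / 2) := by
        rw [hδdef]
        rcases le_total z (x / 2) with hz | hz
        · have h1 : x ^ 2 / 16 ≤ (x - z) ^ 2 / 4 := by
            nlinarith [mul_nonneg (by linarith : (0:ℝ) ≤ x / 2 - z)
              (by linarith : (0:ℝ) ≤ x - z + x / 2)]
          have h2 : min (x ^ 2 / 16) (x * q0 / 4) ≤ x ^ 2 / 16 := min_le_left _ _
          have h3 : (0:ℝ) ≤ min (z ^ 2 / 4) (z * q0 / 2) :=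
            le_min (by positivity) (by positivity)
          linarith
        · have h1 : min (x ^ 2 / 16) (x * q0 / 4) ≤ min (z ^ 2 / 4) (z * q0 / 2) := by
            apply min_le_min
            · nlinarith [mul_nonneg (by linarith : (0:ℝ) ≤ z - x / 2)
                (by linarith : (0:ℝ) ≤ z + x / 2)]
            · linarith [mul_le_mul_of_nonneg_right
                (by linarith : x ≤ 2 * z) hq0.le]
          have h2 : (0:ℝ) ≤ (x - z) ^ 2 / 4 := by positivity
          have h3 : y ^ 2 / 4 ≤ ((x - z) ^ 2 + y ^ 2) / 4 := by
            linarith [sq_nonneg (x - z)]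
          linarith
      linarith [hfield, hroad, hkey, hsplit.ge, hsplit.le]
    · subst h
      have hm := lr_lower D μ ν κ hD pq hpq hq0 hDq0 hx
      have h1 : min (x ^ 2 / 16) (x * q0 / 4) ≤ min (x ^ 2 / 4) (x * q0 / 2) := by
        apply min_le_min
        · linarith [sq_nonneg x]
        · linarith [mul_nonneg hx hq0.le]
      rw [hδdef, hy0]
      have e0 : (0:ℝ) ^ 2 / 4 = 0 := by norm_num
      rw [e0, add_zero]
      linarith
  have := le_csInf (jset_nonempty pq x y) hbound
  linarith

/-- The value function is strictly radially increasing: for each direction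
`ϑ ∈ [0, π/2]`, the map `r ↦ J(r sin ϑ, r cos ϑ)` is strictly increasing on
`[0, ∞)`. -/
theorem J_strictly_radially_increasing
    (D μ ν κ : ℝ) (hD : 1 < D) (hμ : 0 < μ) (hν : 0 < ν) (hκ : 0 < κ)
    (pq : ℝ → ℝ) (hpq : IsCriticalSlope D μ ν κ pq)
    (ϑ : ℝ) (hϑ0 : 0 ≤ ϑ) (hϑ : ϑ≤ π / 2) :
    StrictMonoOn (fun r : ℝ => J pq (r * Real.sin ϑ) (r * Real.cos ϑ))
      (Set.Ici 0) := by
  have h0 : pq 0 = 0 := (hpq 0).1 (by nlinarith)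
  intro r1 hr1 r2 hr2 h12
  simp only [Set.mem_Ici] at hr1 hr2
  show J pq (r1 * Real.sin ϑ) (r1 * Real.cos ϑ) <
    J pq (r2 * Real.sin ϑ) (r2 * Real.cos ϑ)
  have hpi := Real.pi_pos
  have hs : 0 ≤ Real.sin ϑ :=
    Real.sin_nonneg_of_nonneg_of_le_pi hϑ0 (by linarith)
  have hc : 0 ≤ Real.cos ϑ :=
    Real.cos_nonneg_of_mem_Icc ⟨by linarith, hϑ⟩
  have hr2pos : 0 < r2 := lt_of_le_of_lt hr1 h12
  obtain ⟨l, hl⟩ : ∃ l : ℝ, l = r1 / r2 := ⟨_, rfl⟩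
  have hl0 : 0 ≤ l := hl ▸ div_nonneg hr1 hr2pos.le
  have hl1 : l < 1 := hl ▸ (div_lt_one hr2pos).2 h12
  have hx2 : 0 ≤ r2 * Real.sin ϑ := mul_nonneg hr2pos.le hs
  have hy2 : 0 ≤ r2 * Real.cos ϑ := mul_nonneg hr2pos.le hc
  have hx1 : 0 ≤ r1 * Real.sin ϑ := mul_nonneg hr1 hs
  have hxy : 0 < (r2 * Real.sin ϑ) ^ 2 + (r2 * Real.cos ϑ) ^ 2 := by
    have e : (r2 * Real.sin ϑ) ^ 2 + (r2 * Real.cos ϑ) ^ 2 =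
        r2 ^ 2 * (Real.sin ϑ ^ 2 + Real.cos ϑ ^ 2) := by ring
    rw [e, Real.sin_sq_add_cos_sq, mul_one]
    positivity
  have e1 : r1 * Real.sin ϑ = l * (r2 * Real.sin ϑ) := by
    rw [hl]; field_simp
  have e2 : r1 * Real.cos ϑ = l * (r2 * Real.cos ϑ) := by
    rw [hl]; field_simp
  unfold J
  rw [abs_of_nonneg hx1, abs_of_nonneg hx2, e1, e2]
  have hscale := sInf_jset_scale h0 (x := r2 * Real.sin ϑ)
    (y := r2 * Real.cos ϑ) hl0 hl1.le
  have hgap := jset_gap D μ ν κ hD pq hpq hx2 hy2 hxy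
  nlinarith [mul_pos (by linarith : (0:ℝ) < 1 - l)
    (by linarith : (0:ℝ) < sInf (Jset pq (r2 * Real.sin ϑ) (r2 * Real.cos ϑ)) + 1)]
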